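/- Let s ∈ (0,1), let M be a Young function, and let u : ℝⁿ → ℝ be measurable. Then for every h ∈ ℝⁿ with 0 < |h| < 1/2, ∫_{ℝⁿ} M(|u(x+h) − u(x)|) dx ≤ (2^{n+1}/ω_n) ∬_{ℝ^{2n}} M(2^{s+1} |h|^s D^s u(x,y)) dν_n(x,y), where ω_n denotes the Lebesgue measure of the unit ball of ℝⁿ (both sides interpreted as values in [0,∞]). -/

import Mathlib

open MeasureTheory Filter Topology Set
open scoped ENNReal NNReal

noncomputable section

/-- ℝⁿ with the Euclidean norm. -/
abbrev Rn (n : ℕ) : Type := EuclideanSpace ℝ (Fin n)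

/-- The measure dν_n = dx dy / |x-y|^n on ℝ^{2n}. -/
def nuMeasure (n : ℕ) : Measure (Rn n × Rn n) :=
  volume.withDensity fun p => ENNReal.ofReal (‖p.1 - p.2‖ ^ (-(n : ℝ)))

/-- Hölder quotient `D^s u (x,y) = (u x - u y)/|x-y|^s`. -/
def Ds (n : ℕ) (s : ℝ) (u : Rn n → ℝ) (p : Rn n × Rn n) : ℝ :=
  (u p.1 - u p.2) / ‖p.1 - p.2‖ ^ s

/-- A Young function, encoded by its density `m` which is nondecreasing, right continuous,
vanishing exactly at `0`, tending to `∞` and extended to `ℝ` as an odd function. -/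
structure YoungFunction where
  m : ℝ → ℝ
  nonneg : ∀ t, 0 ≤ t → 0 ≤ m t
  mono : MonotoneOn m (Set.Ici 0)
  rightCont : ∀ t, 0 ≤ t → ContinuousWithinAt m (Set.Ici t) t
  zero_iff : ∀ t, 0 ≤ t → (m t = 0 ↔ t = 0)
  tendsto_top : Filter.Tendsto m Filter.atTop Filter.atTop
  odd : ∀ t, m (-t) = -m t

/-- `M(t) = ∫_0^{|t|} m(τ) dτ`. -/
def YoungFunction.M (Y : YoungFunction) (t : ℝ) : ℝ :=
  ∫ τ in (0:ℝ)..|t|, Y.m τ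

namespace YoungFunction
variable (Y : YoungFunction)

lemma m_intInt {a b : ℝ} (ha : 0 ≤ a) (hab : a ≤ b) :
    IntervalIntegrable Y.m volume a b := by
  apply MonotoneOn.intervalIntegrable
  apply Y.mono.mono
  rw [Set.uIcc_of_le hab]
  exact fun x hx => ha.trans hx.1

lemma M_nonneg (t : ℝ) : 0 ≤ Y.M t := by
  apply intervalIntegral.integral_nonneg (abs_nonneg t)
  exact fun τ hτ => Y.nonneg τ hτ.1

lemma M_zero : Y.M 0 = 0 := by simp [YoungFunction.M]

lemma M_abs (t : ℝ) : Y.M |t| = Y.M t := by simp [YoungFunction.M, abs_abs]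

lemma M_add_eq {a b : ℝ} (ha : 0 ≤ a) (hab : a ≤ b) :
    Y.M b = Y.M a + ∫ τ in a..b, Y.m τ := by
  unfold YoungFunction.M
  rw [abs_of_nonneg (ha.trans hab), abs_of_nonneg ha,
    intervalIntegral.integral_add_adjacent_intervals (Y.m_intInt le_rfl ha)
      (Y.m_intInt ha hab)]

lemma M_mono {a b : ℝ} (ha : 0 ≤ a) (hab : a ≤ b) : Y.M a ≤ Y.M b := by
  rw [Y.M_add_eq ha hab]
  have : 0 ≤ ∫ τ in a..b, Y.m τ :=
    intervalIntegral.integral_nonneg hab (fun τ hτ => Y.nonneg τ (ha.trans hτ.1))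
  linarith

lemma midpoint_aux {a b : ℝ} (ha : 0 ≤ a) (hab : a ≤ b) :
    2 * Y.M (a + b) ≤ Y.M (2 * a) + Y.M (2 * b) := by
  have hb : 0 ≤ b := ha.trans hab
  have h1 : Y.M (a + b) = Y.M (2 * a) + ∫ τ in (2*a)..(a+b), Y.m τ :=
    Y.M_add_eq (by linarith) (by linarith)
  have h2 : Y.M (2 * b) = Y.M (a + b) + ∫ τ in (a+b)..(2*b), Y.m τ :=
    Y.M_add_eq (by linarith) (by linarith)
  have hmem : (a + b) ∈ Set.Ici (0:ℝ) := by simp; linarith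
  have e1 : ∫ τ in (2*a)..(a+b), Y.m τ ≤ (b - a) * Y.m (a + b) := by
    have := intervalIntegral.integral_mono_on (by linarith : 2*a ≤ a+b)
      (Y.m_intInt (by linarith) (by linarith)) intervalIntegrable_const
      (fun x hx => Y.mono (by simp; linarith [hx.1]) hmem hx.2)
    simpa using this.trans_eq (by rw [intervalIntegral.integral_const]; ring_nf)
  have e2 : (b - a) * Y.m (a + b) ≤ ∫ τ in (a+b)..(2*b), Y.m τ := by
    have := intervalIntegral.integral_mono_on (by linarith : a+b ≤ 2*b)
      intervalIntegrable_const (Y.m_intInt (by linarith) (by linarith))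
      (fun x hx => Y.mono hmem (by simp; linarith [hx.1]) hx.1)
    calc (b - a) * Y.m (a+b) = ∫ _ in (a+b)..(2*b), Y.m (a+b) := by
          rw [intervalIntegral.integral_const, smul_eq_mul]; ring
      _ ≤ _ := this
  linarith

lemma M_midpoint {a b : ℝ} (ha : 0 ≤ a) (hb : 0 ≤ b) :
    Y.M (a + b) ≤ (Y.M (2 * a) + Y.M (2 * b)) / 2 := by
  rcases le_total a b with hab | hab
  · have := Y.midpoint_aux ha hab; linarith
  · have := Y.midpoint_aux hb hab; rw [add_comm b a] at this; linarith

lemma measurable_M : Measurable Y.M := by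
  have hmono : Monotone (fun r => Y.M (max r 0)) := fun a b hab =>
    Y.M_mono (le_max_right _ _) (max_le_max hab le_rfl)
  have : Y.M = (fun r => Y.M (max r 0)) ∘ abs := by
    funext t
    simp only [Function.comp_apply, max_eq_left (abs_nonneg t), Y.M_abs]
  rw [this]
  exact hmono.measurable.comp measurable_abs

end YoungFunction

/-- The complementary Young function `M̄(t) = sup {τ|t| - M(τ) : τ ≥ 0}`. -/
def YoungFunction.Mbar (Y : YoungFunction) (t : ℝ) : ℝ :=
  sSup {x : ℝ | ∃ τ, 0 ≤ τ ∧ x = τ * |t| - Y.M τ}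

/-- The segment property for a bounded open set. -/
def SegmentProperty {n : ℕ} (Ω : Set (Rn n)) : Prop :=
  ∃ (ι : Type) (c : ι → Rn n) (t : ℝ) (ν : ι → Rn n) (tstar : ℝ),
    0 < t ∧ 0 < tstar ∧ tstar < 1 ∧
    (∀ j, c j ∈ frontier Ω) ∧
    (∀ j, ‖ν j‖ = 1) ∧
    frontier Ω ⊆ ⋃ j, Metric.ball (c j) t ∧
    LocallyFinite (fun j => Metric.ball (c j) t) ∧
    ∀ j, ∀ x ∈ closure Ω ∩ Metric.ball (c j) t, ∀ τ : ℝ, 0 < τ → τ < tstar →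
      x + τ • ν j ∈ Ω

/-- Luxemburg norm. -/
def luxNorm {α : Type*} [MeasurableSpace α] (μ : Measure α) (M : ℝ → ℝ) (f : α → ℝ) : ℝ :=
  sInf {k : ℝ | 0 < k ∧ ∫⁻ a, ENNReal.ofReal (M (f a / k)) ∂μ ≤ 1}

/-- the modular translation estimate (Lemma B.1 of the paper):
for `0 < |h| < 1/2`,
`∫ M(|u(x+h) − u(x)|) dx ≤ (2^{n+1}/ω_n) ∬ M(2^{s+1}|h|^s D^s u) dν_n`,
where `ω_n` is the Lebesgue measure of the unit ball of `ℝⁿ`. -/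
theorem modular_translation_estimate (n : ℕ) (hn : 0 < n) (s : ℝ)
    (hs : s ∈ Set.Ioo (0 : ℝ) 1) (Y : YoungFunction)
    (u : Rn n → ℝ) (hu : Measurable u)
    (h : Rn n) (h0 : 0 < ‖h‖) (hh : ‖h‖ < 1 / 2) :
    ∫⁻ x, ENNReal.ofReal (Y.M |u (x + h) - u x|) ≤
      ENNReal.ofReal ((2 : ℝ) ^ (n + 1) / (volume (Metric.ball (0 : Rn n) 1)).toReal) *
        ∫⁻ p, ENNReal.ofReal (Y.M ((2 : ℝ) ^ (s + 1) * ‖h‖ ^ s * Ds n s u p))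
          ∂nuMeasure n := by
  obtain ⟨hs0, hs1⟩ := hs
  set C : ℝ := (2 : ℝ) ^ (s + 1) * ‖h‖ ^ s with hCdef
  have hC : 0 < C := mul_pos (Real.rpow_pos_of_pos two_pos _) (Real.rpow_pos_of_pos h0 _)
  -- basic abbreviations
  set ω : ℝ≥0∞ := volume (Metric.ball (0 : Rn n) 1) with hωdef
  have hω0 : ω ≠ 0 := (Metric.measure_ball_pos volume 0 one_pos).ne'
  have hωtop : ω ≠ ⊤ := measure_ball_lt_top.ne
  have hωr : 0 < ω.toReal := ENNReal.toReal_pos hω0 hωtop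
  set V : ℝ≥0∞ := ENNReal.ofReal (‖h‖ ^ n) * ω with hVdef
  have hV0 : V ≠ 0 := by
    apply mul_ne_zero _ hω0
    simp [ENNReal.ofReal_eq_zero, not_le, pow_pos h0, norm_pos_iff.mp h0]
  have hVtop : V ≠ ⊤ := ENNReal.mul_ne_top ENNReal.ofReal_ne_top hωtop
  have hball : ∀ x : Rn n, volume (Metric.ball x ‖h‖) = V := by
    intro x
    rw [Measure.addHaar_ball_of_pos volume x h0, finrank_euclideanSpace_fin]
  -- functions
  set P : Rn n → Rn n → ℝ≥0∞ :=
    fun x y => ENNReal.ofReal (Y.M (C * Ds n s u (x, y))) with hPdef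
  set c : Rn n → ℝ≥0∞ := fun x => ENNReal.ofReal (Y.M |u (x + h) - u x|) with hcdef
  have hDsmeas : Measurable (Ds n s u) := by
    apply Measurable.div
    · exact (hu.comp measurable_fst).sub (hu.comp measurable_snd)
    · exact ((Real.continuous_rpow_const hs0.le).comp
        ((continuous_fst.sub continuous_snd).norm)).measurable
  have hPmeas : Measurable (fun p : Rn n × Rn n => P p.1 p.2) := by
    exact (Y.measurable_M.comp (hDsmeas.const_mul C)).ennreal_ofReal
  -- key Young-function bound
  have keyM : ∀ a b : Rn n, ‖a - b‖ ≤ 2 * ‖h‖ →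
      Y.M (2 * |u a - u b|) ≤ Y.M (C * Ds n s u (a, b)) := by
    intro a b hab
    rcases eq_or_ne (u a - u b) 0 with hz | hz
    · rw [hz, abs_zero, mul_zero, Y.M_zero]
      exact Y.M_nonneg _
    · have hr : 0 < ‖a - b‖ := by
        rw [norm_pos_iff, sub_ne_zero]
        rintro rfl; simp at hz
      have hrs : 0 < ‖a - b‖ ^ s := Real.rpow_pos_of_pos hr s
      rw [← Y.M_abs (C * Ds n s u (a, b))]
      have habs : |C * Ds n s u (a, b)| = C * |u a - u b| / ‖a - b‖ ^ s := by
        rw [show Ds n s u (a, b) = (u a - u b) / ‖a - b‖ ^ s from rfl,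
          abs_mul, abs_of_pos hC, abs_div, abs_of_pos hrs, mul_div_assoc]
      rw [habs]
      apply Y.M_mono (by positivity)
      rw [le_div_iff₀ hrs]
      have h1 : ‖a - b‖ ^ s ≤ 2 ^ s * ‖h‖ ^ s := by
        calc ‖a - b‖ ^ s ≤ (2 * ‖h‖) ^ s := Real.rpow_le_rpow (norm_nonneg _) hab hs0.le
          _ = 2 ^ s * ‖h‖ ^ s := Real.mul_rpow (by norm_num) (norm_nonneg h)
      have hC2 : C = 2 * (2 ^ s * ‖h‖ ^ s) := by
        rw [hCdef, Real.rpow_add two_pos, Real.rpow_one]; ring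
      calc 2 * |u a - u b| * ‖a - b‖ ^ s ≤ 2 * |u a - u b| * (2 ^ s * ‖h‖ ^ s) :=
            mul_le_mul_of_nonneg_left h1 (by positivity)
        _ = C * |u a - u b| := by rw [hC2]; ring
  -- key pointwise bound
  have keyPt : ∀ x y : Rn n, ‖x - y‖ < ‖h‖ → c x ≤ P (x + h) y / 2 + P x y / 2 := by
    intro x y hxy
    have hA : Y.M |u (x + h) - u x| ≤
        (Y.M (2 * |u (x + h) - u y|) + Y.M (2 * |u y - u x|)) / 2 := by
      have h1 : Y.M |u (x + h) - u x| ≤ Y.M (|u (x + h) - u y| + |u y - u x|) :=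
        Y.M_mono (abs_nonneg _) (abs_sub_le _ _ _)
      exact h1.trans (Y.M_midpoint (abs_nonneg _) (abs_nonneg _))
    have h2 : Y.M (2 * |u (x + h) - u y|) ≤ Y.M (C * Ds n s u (x + h, y)) := by
      apply keyM
      have e : x + h - y = (x - y) + h := by abel
      rw [e]
      calc ‖x - y + h‖ ≤ ‖x - y‖ + ‖h‖ := norm_add_le _ _
        _ ≤ 2 * ‖h‖ := by linarith
    have h3 : Y.M (2 * |u y - u x|) ≤ Y.M (C * Ds n s u (x, y)) := by
      rw [abs_sub_comm]
      exact keyM x y (by linarith)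
    calc c x ≤ ENNReal.ofReal
          ((Y.M (C * Ds n s u (x + h, y)) + Y.M (C * Ds n s u (x, y))) / 2) := by
          apply ENNReal.ofReal_le_ofReal
          apply hA.trans
          have := Y.M_nonneg (C * Ds n s u (x + h, y))
          linarith
      _ = P (x + h) y / 2 + P x y / 2 := by
          rw [ENNReal.ofReal_div_of_pos two_pos,
            ENNReal.ofReal_add (Y.M_nonneg _) (Y.M_nonneg _), ENNReal.add_div,
            ENNReal.ofReal_ofNat]
  -- auxiliary kernels
  set ψ : Rn n → Rn n → ℝ≥0∞ :=
    fun z y => if ‖z - y - h‖ < ‖h‖ then P z y / 2 else 0 with hψdef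
  set φ : Rn n → Rn n → ℝ≥0∞ :=
    fun x y => if ‖x - y‖ < ‖h‖ then P x y / 2 else 0 with hφdef
  set ρ : Rn n → Rn n → ℝ≥0∞ :=
    fun x y => if ‖x - y‖ < 2 * ‖h‖ then P x y else 0 with hρdef
  have meas_ψ : Measurable (fun p : Rn n × Rn n => ψ p.1 p.2) := by
    apply Measurable.ite _ (hPmeas.div_const 2) measurable_const
    exact measurableSet_lt
      ((continuous_fst.sub continuous_snd).sub continuous_const).norm.measurable
      measurable_const
  have meas_φ : Measurable (fun p : Rn n × Rn n => φ p.1 p.2) := by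
    apply Measurable.ite _ (hPmeas.div_const 2) measurable_const
    exact measurableSet_lt (continuous_fst.sub continuous_snd).norm.measurable
      measurable_const
  -- step 1: pointwise-in-x estimate after averaging in y
  have step1 : ∀ x : Rn n, c x * V ≤ ∫⁻ y, (ψ (x + h) y + φ x y) := by
    intro x
    have e : c x * V = ∫⁻ y, (Metric.ball x ‖h‖).indicator (fun _ => c x) y := by
      rw [lintegral_indicator measurableSet_ball, setLIntegral_const, hball x]
    rw [e]
    apply lintegral_mono
    intro y
    by_cases hy : y ∈ Metric.ball x ‖h‖
    · have hxy : ‖x - y‖ < ‖h‖ := by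
        rw [norm_sub_rev]
        rw [Metric.mem_ball, dist_eq_norm] at hy
        exact hy
      have e1 : x + h - y - h = x - y := by abel
      rw [Set.indicator_of_mem hy]
      refine (keyPt x y hxy).trans ?_
      simp only [hψdef, hφdef, e1, if_pos hxy]
      exact le_rfl
    · simp [Set.indicator_of_notMem hy]
  -- step 2: integrate in x
  have step2 : (∫⁻ x, c x) * V ≤ ∫⁻ x, ∫⁻ y, (ψ (x + h) y + φ x y) := by
    rw [← lintegral_mul_const' V c hVtop]
    exact lintegral_mono step1
  -- split the sum
  have meas_Ψ : Measurable (fun z : Rn n => ∫⁻ y, ψ z y) :=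
    Measurable.lintegral_prod_right' meas_ψ
  have hsplit : (∫⁻ x, ∫⁻ y, (ψ (x + h) y + φ x y))
      = (∫⁻ x, ∫⁻ y, ψ (x + h) y) + ∫⁻ x, ∫⁻ y, φ x y := by
    have e1 : ∀ x : Rn n, (∫⁻ y, (ψ (x + h) y + φ x y))
        = (∫⁻ y, ψ (x + h) y) + ∫⁻ y, φ x y := by
      intro x
      exact lintegral_add_left (meas_ψ.comp (measurable_prodMk_left (x := x + h))) _
    simp_rw [e1]
    exact lintegral_add_left (meas_Ψ.comp (measurable_add_const h)) _
  -- translation invariance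
  have htrans : (∫⁻ x, ∫⁻ y, ψ (x + h) y) = ∫⁻ z, ∫⁻ y, ψ z y :=
    lintegral_add_right_eq_self (fun z => ∫⁻ y, ψ z y) h
  -- comparison with ρ
  have hψρ : ∀ z y, ψ z y ≤ ρ z y := by
    intro z y
    by_cases hcnd : ‖z - y - h‖ < ‖h‖
    · have h2 : ‖z - y‖ < 2 * ‖h‖ := by
        have e : z - y = z - y - h + h := by abel
        calc ‖z - y‖ = ‖z - y - h + h‖ := by rw [← e]
          _ ≤ ‖z - y - h‖ + ‖h‖ := norm_add_le _ _
          _ < 2 * ‖h‖ := by linarith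
      simp only [hψdef, hρdef, if_pos hcnd, if_pos h2]
      exact ENNReal.half_le_self
    · simp [hψdef, if_neg hcnd]
  have hφρ : ∀ x y, φ x y ≤ ρ x y := by
    intro x y
    by_cases hcnd : ‖x - y‖ < ‖h‖
    · have h2 : ‖x - y‖ < 2 * ‖h‖ := by linarith
      simp only [hφdef, hρdef, if_pos hcnd, if_pos h2]
      exact ENNReal.half_le_self
    · simp [hφdef, if_neg hcnd]
  -- pointwise domination by the density
  have hDs0 : ∀ x : Rn n, Ds n s u (x, x) = 0 := by
    intro x
    show (u x - u x) / ‖x - x‖ ^ s = 0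
    simp
  have step7 : ∀ x y, ρ x y ≤ ENNReal.ofReal ((2 * ‖h‖) ^ n) *
      (ENNReal.ofReal (‖x - y‖ ^ (-(n : ℝ))) * P x y) := by
    intro x y
    by_cases hcnd : ‖x - y‖ < 2 * ‖h‖
    · rcases eq_or_ne x y with rfl | hne
      · have hP0 : P x x = 0 := by
          simp only [hPdef, hDs0, mul_zero, Y.M_zero, ENNReal.ofReal_zero]
        simp [hρdef, hP0]
      · have hr : 0 < ‖x - y‖ := by rw [norm_pos_iff, sub_ne_zero]; exact hne
        have h1 : (1 : ℝ) ≤ (2 * ‖h‖) ^ n * ‖x - y‖ ^ (-(n : ℝ)) := by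
          rw [Real.rpow_neg hr.le, Real.rpow_natCast, ← div_eq_mul_inv,
            le_div_iff₀ (pow_pos hr n), one_mul]
          exact pow_le_pow_left₀ hr.le hcnd.le n
        simp only [hρdef, if_pos hcnd]
        calc P x y = 1 * P x y := (one_mul _).symm
          _ ≤ ENNReal.ofReal ((2 * ‖h‖) ^ n) * ENNReal.ofReal (‖x - y‖ ^ (-(n : ℝ)))
                * P x y := by
              gcongr
              rw [← ENNReal.ofReal_mul (by positivity)]
              exact ENNReal.one_le_ofReal.mpr h1
          _ = _ := by rw [mul_assoc]
    · simp [hρdef, if_neg hcnd]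
  -- step 8
  have step8 : (∫⁻ x, ∫⁻ y, ρ x y) ≤ ENNReal.ofReal ((2 * ‖h‖) ^ n) *
      ∫⁻ x, ∫⁻ y, ENNReal.ofReal (‖x - y‖ ^ (-(n : ℝ))) * P x y := by
    rw [← lintegral_const_mul' _ _ ENNReal.ofReal_ne_top]
    apply lintegral_mono
    intro x
    dsimp only
    rw [← lintegral_const_mul' _ _ ENNReal.ofReal_ne_top]
    exact lintegral_mono (step7 x)
  -- step 9 : identify the ν-integral
  have hdmeas : Measurable
      (fun p : Rn n × Rn n => ENNReal.ofReal (‖p.1 - p.2‖ ^ (-(n : ℝ)))) := by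
    apply Measurable.ennreal_ofReal
    have e : (fun p : Rn n × Rn n => ‖p.1 - p.2‖ ^ (-(n : ℝ)))
        = fun p => (‖p.1 - p.2‖ ^ n)⁻¹ := by
      funext p
      rw [Real.rpow_neg (norm_nonneg _), Real.rpow_natCast]
    rw [e]
    exact ((measurable_fst.sub measurable_snd).norm.pow_const n).inv
  have step9 : (∫⁻ p, ENNReal.ofReal (Y.M (C * Ds n s u p)) ∂nuMeasure n)
      = ∫⁻ x, ∫⁻ y, ENNReal.ofReal (‖x - y‖ ^ (-(n : ℝ))) * P x y := by
    rw [nuMeasure, lintegral_withDensity_eq_lintegral_mul _ hdmeas hPmeas]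
    simp only [Pi.mul_apply]
    rw [Measure.volume_eq_prod]
    exact lintegral_prod _ ((hdmeas.mul hPmeas).aemeasurable)
  -- final combination
  have hKV : ENNReal.ofReal ((2 : ℝ) ^ (n + 1) / ω.toReal) * V
      = ENNReal.ofReal (2 * (2 * ‖h‖) ^ n) := by
    rw [hVdef, ← mul_assoc, ← ENNReal.ofReal_mul (by positivity),
      ← ENNReal.ofReal_toReal hωtop, ← ENNReal.ofReal_mul (by positivity)]
    congr 1
    simp only [ENNReal.toReal_ofReal ENNReal.toReal_nonneg]
    field_simp
    ring
  have main : (∫⁻ x, c x) * V ≤ ENNReal.ofReal (2 * (2 * ‖h‖) ^ n) *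
      ∫⁻ p, ENNReal.ofReal (Y.M (C * Ds n s u p)) ∂nuMeasure n := by
    calc (∫⁻ x, c x) * V ≤ ∫⁻ x, ∫⁻ y, (ψ (x + h) y + φ x y) := step2
      _ = (∫⁻ x, ∫⁻ y, ψ (x + h) y) + ∫⁻ x, ∫⁻ y, φ x y := hsplit
      _ = (∫⁻ z, ∫⁻ y, ψ z y) + ∫⁻ x, ∫⁻ y, φ x y := by rw [htrans]
      _ ≤ (∫⁻ x, ∫⁻ y, ρ x y) + ∫⁻ x, ∫⁻ y, ρ x y :=
          add_le_add (lintegral_mono fun x => lintegral_mono fun y => hψρ x y)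
            (lintegral_mono fun x => lintegral_mono fun y => hφρ x y)
      _ = 2 * ∫⁻ x, ∫⁻ y, ρ x y := (two_mul _).symm
      _ ≤ 2 * (ENNReal.ofReal ((2 * ‖h‖) ^ n) *
            ∫⁻ x, ∫⁻ y, ENNReal.ofReal (‖x - y‖ ^ (-(n : ℝ))) * P x y) := by
          gcongr
      _ = ENNReal.ofReal (2 * (2 * ‖h‖) ^ n) *
            ∫⁻ x, ∫⁻ y, ENNReal.ofReal (‖x - y‖ ^ (-(n : ℝ))) * P x y := by
          rw [ENNReal.ofReal_mul (by norm_num), ENNReal.ofReal_ofNat, mul_assoc]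
      _ = _ := by rw [step9]
  have final : (∫⁻ x, c x) * V ≤
      (ENNReal.ofReal ((2 : ℝ) ^ (n + 1) / ω.toReal) *
        ∫⁻ p, ENNReal.ofReal (Y.M (C * Ds n s u p)) ∂nuMeasure n) * V := by
    calc (∫⁻ x, c x) * V ≤ ENNReal.ofReal (2 * (2 * ‖h‖) ^ n) *
          ∫⁻ p, ENNReal.ofReal (Y.M (C * Ds n s u p)) ∂nuMeasure n := main
      _ = (ENNReal.ofReal ((2 : ℝ) ^ (n + 1) / ω.toReal) * V) *
          ∫⁻ p, ENNReal.ofReal (Y.M (C * Ds n s u p)) ∂nuMeasure n := by rw [hKV]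
      _ = _ := by ring
  exact (ENNReal.mul_le_mul_iff_left hV0 hVtop).mp final
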